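/- Let q > 1 and n_1,…,n_m be positive integers with n = ∑ n_i, and let b_j (0 ≤ j ≤ n) be the integers defined by b_j = q^j + ∑_{i=1}^j (−1)^i ∑_{1 ≤ m_1<…<m_i ≤ m, ∑ n_{m_l} ≤ j} q^{j−∑ n_{m_l}}, and set b̂_j = ∑_{i=0}^{j} b_i (with b̂_{−1} = 0). If n_1 = 1, then b̂_j^{(n_1,…,n_m)} = b_j^{(n_2,…,n_m)} for all j, where b_j^{(n_2,…,n_m)} is defined by the analogous formula for the tuple (n_2,…,n_m). -/
import Mathlib


open Finset

/-- The inclusion–exclusion count `b_j` attached to a tuple of positive integers. -/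
def bIE (q : ℤ) {m : ℕ} (n : Fin m → ℕ) (j : ℕ) : ℤ :=
  q ^ j + ∑ i ∈ Finset.Icc 1 j, (-1 : ℤ) ^ i *
    ∑ S ∈ (Finset.univ.powersetCard i : Finset (Finset (Fin m))).filter
        (fun S => ∑ l ∈ S, n l ≤ j),
      q ^ (j - ∑ l ∈ S, n l)

/-- The partial sums `b̂_j = b_0 + ⋯ + b_j`. -/
def bIEhat (q : ℤ) {m : ℕ} (n : Fin m → ℕ) (j : ℕ) : ℤ :=
  ∑ i ∈ Finset.range (j + 1), bIE q n i

def Pfun (q : ℤ) {m : ℕ} (n : Fin m → ℕ) (j : ℕ) : ℤ :=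
  ∑ S ∈ (Finset.univ : Finset (Fin m)).powerset,
    if ∑ l ∈ S, n l ≤ j then (-1 : ℤ) ^ S.card * q ^ (j - ∑ l ∈ S, n l) else 0

lemma bIE_eq_Pfun (q : ℤ) {m : ℕ} (n : Fin m → ℕ) (hn : ∀ i, 1 ≤ n i) (j : ℕ) :
    bIE q n j = Pfun q n j := by
  set A : ℕ → ℤ := fun i => (-1 : ℤ) ^ i *
    ∑ S ∈ (Finset.univ.powersetCard i : Finset (Finset (Fin m))).filter
        (fun S => ∑ l ∈ S, n l ≤ j),
      q ^ (j - ∑ l ∈ S, n l) with hA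
  have hA0 : A 0 = q ^ j := by
    simp only [hA, pow_zero, one_mul, Finset.powersetCard_zero]
    rw [Finset.filter_singleton]
    simp
  have hAzero_j : ∀ i, j < i → A i = 0 := by
    intro i hi
    have : ((Finset.univ.powersetCard i : Finset (Finset (Fin m))).filter
        (fun S => ∑ l ∈ S, n l ≤ j)) = ∅ := by
      rw [Finset.filter_eq_empty_iff]
      intro S hS
      rw [Finset.mem_powersetCard_univ] at hS
      have hle : S.card ≤ ∑ l ∈ S, n l := by
        calc S.card = ∑ _l ∈ S, 1 := by simp
        _ ≤ ∑ l ∈ S, n l := Finset.sum_le_sum fun l _ => hn l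
      omega
    simp [hA, this]
  have hAzero_m : ∀ i, m < i → A i = 0 := by
    intro i hi
    have : (Finset.univ.powersetCard i : Finset (Finset (Fin m))) = ∅ := by
      apply Finset.powersetCard_eq_empty.2
      simpa using hi
    simp [hA, this]
  have h1 : bIE q n j = ∑ i ∈ Finset.range (j + 1), A i := by
    have hins : Finset.range (j + 1) = insert 0 (Finset.Icc 1 j) := by
      ext x; simp [Nat.lt_succ_iff]; omega
    rw [hins, Finset.sum_insert (by simp), hA0, bIE]
  have h2 : Pfun q n j = ∑ i ∈ Finset.range (m + 1), A i := by
    rw [Pfun, Finset.sum_powerset]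
    simp only [Finset.card_univ, Fintype.card_fin]
    refine Finset.sum_congr rfl fun i _ => ?_
    simp only [hA]
    rw [Finset.mul_sum, Finset.sum_filter]
    refine Finset.sum_congr rfl fun S hS => ?_
    rw [Finset.mem_powersetCard_univ] at hS
    rw [hS]
  have h3 : ∑ i ∈ Finset.range (j + 1), A i = ∑ i ∈ Finset.range (max j m + 1), A i := by
    apply Finset.sum_subset
    · intro x hx; simp at hx ⊢; omega
    · intro x _ hx; simp at hx; exact hAzero_j x (by omega)
  have h4 : ∑ i ∈ Finset.range (m + 1), A i = ∑ i ∈ Finset.range (max j m + 1), A i := by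
    apply Finset.sum_subset
    · intro x hx; simp at hx ⊢; omega
    · intro x _ hx; simp at hx; exact hAzero_m x (by omega)
  rw [h1, h2, h3, h4]

lemma sum_powerset_map {α β M : Type*} [AddCommMonoid M] (e : α ↪ β) (s : Finset α)
    (f : Finset β → M) :
    ∑ t ∈ (s.map e).powerset, f t = ∑ t ∈ s.powerset, f (t.map e) := by
  have hps : (s.map e).powerset = s.powerset.map ⟨Finset.map e, Finset.map_injective e⟩ := by
    ext t
    simp only [Finset.mem_powerset, Finset.mem_map, Function.Embedding.coeFn_mk]
    rw [Finset.subset_map_iff]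
    constructor
    · rintro ⟨u, hu, rfl⟩; exact ⟨u, hu, rfl⟩
    · rintro ⟨u, hu, rfl⟩; exact ⟨u, hu, rfl⟩
  rw [hps, Finset.sum_map]
  rfl

lemma Pfun_split (q : ℤ) {m : ℕ} (n : Fin (m + 1) → ℕ) (h1 : n 0 = 1) (j : ℕ) :
    Pfun q n j = Pfun q (n ∘ Fin.succ) j +
      ∑ T ∈ (Finset.univ : Finset (Fin m)).powerset,
        (if (∑ l ∈ T, n (Fin.succ l)) + 1 ≤ j then
          -((-1 : ℤ) ^ T.card * q ^ (j - ((∑ l ∈ T, n (Fin.succ l)) + 1))) else 0) := by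
  classical
  set e : Fin m ↪ Fin (m + 1) := ⟨Fin.succ, Fin.succ_injective m⟩ with he
  have huniv : (Finset.univ : Finset (Fin (m + 1))) = insert 0 (Finset.univ.map e) := by
    rw [Fin.univ_succ, Finset.cons_eq_insert]
  have h0 : (0 : Fin (m + 1)) ∉ Finset.univ.map e := by
    simp only [Finset.mem_map, he, Function.Embedding.coeFn_mk]
    rintro ⟨l, -, hl⟩
    exact Fin.succ_ne_zero l hl
  rw [Pfun, huniv, Finset.sum_powerset_insert h0, sum_powerset_map, sum_powerset_map]
  congr 1
  · rw [Pfun]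
    refine Finset.sum_congr rfl fun T _ => ?_
    rw [Finset.sum_map, Finset.card_map]
    rfl
  · refine Finset.sum_congr rfl fun T hT => ?_
    have h0T : (0 : Fin (m + 1)) ∉ T.map e := by
      simp only [Finset.mem_map, he, Function.Embedding.coeFn_mk]
      rintro ⟨l, -, hl⟩
      exact Fin.succ_ne_zero l hl
    rw [Finset.sum_insert h0T, Finset.card_insert_of_notMem h0T, Finset.sum_map,
      Finset.card_map, h1]
    have hsum : ∀ x : Fin m, n (e x) = n (Fin.succ x) := fun x => rfl
    simp only [hsum]
    rw [add_comm 1 (∑ l ∈ T, n (Fin.succ l))]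
    split
    · rw [pow_succ]; ring
    · rfl

lemma Pfun_zero_step (q : ℤ) {m : ℕ} (n : Fin (m + 1) → ℕ) (h1 : n 0 = 1) :
    Pfun q n 0 = Pfun q (n ∘ Fin.succ) 0 := by
  rw [Pfun_split q n h1 0]
  have : ∀ T ∈ (Finset.univ : Finset (Fin m)).powerset,
      (if (∑ l ∈ T, n (Fin.succ l)) + 1 ≤ 0 then
        -((-1 : ℤ) ^ T.card * q ^ (0 - ((∑ l ∈ T, n (Fin.succ l)) + 1))) else 0) = 0 := by
    intro T _
    rw [if_neg (by omega)]
  rw [Finset.sum_congr rfl this]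
  simp

lemma Pfun_succ_step (q : ℤ) {m : ℕ} (n : Fin (m + 1) → ℕ) (h1 : n 0 = 1) (j : ℕ) :
    Pfun q n (j + 1) = Pfun q (n ∘ Fin.succ) (j + 1) - Pfun q (n ∘ Fin.succ) j := by
  rw [Pfun_split q n h1 (j + 1), sub_eq_add_neg]
  congr 1
  rw [Pfun, ← Finset.sum_neg_distrib]
  refine Finset.sum_congr rfl fun T _ => ?_
  have hc : ((∑ l ∈ T, n (Fin.succ l)) + 1 ≤ j + 1) ↔ (∑ l ∈ T, (n ∘ Fin.succ) l ≤ j) := by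
    simp only [Function.comp_apply]; omega
  have hsub : (j + 1) - ((∑ l ∈ T, n (Fin.succ l)) + 1) = j - ∑ l ∈ T, (n ∘ Fin.succ) l := by
    simp only [Function.comp_apply]; omega
  by_cases h : ∑ l ∈ T, (n ∘ Fin.succ) l ≤ j
  · rw [if_pos (hc.2 h), if_pos h, hsub]
  · rw [if_neg (fun hh => h (hc.1 hh)), if_neg h, neg_zero]


/-- If the first entry of the tuple is `1`, the partial sums `b̂_j` for the full tuple equal
the plain counts `b_j` for the tuple with that entry removed. -/
theorem bIEhat_eq_bIE_tail (q : ℤ) (hq : 1 < q) (m : ℕ) (n : Fin (m + 1) → ℕ)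
    (hn : ∀ i, 1 ≤ n i) (h1 : n 0 = 1) (j : ℕ) :
    bIEhat q n j = bIE q (n ∘ Fin.succ) j := by
  have hn' : ∀ i, 1 ≤ (n ∘ Fin.succ) i := fun i => hn _
  induction j with
  | zero =>
      rw [bIEhat, Finset.sum_range_one, bIE_eq_Pfun q n hn, bIE_eq_Pfun q _ hn',
        Pfun_zero_step q n h1]
  | succ j ih =>
      rw [bIEhat, Finset.sum_range_succ, ← bIEhat, ih, bIE_eq_Pfun q n hn,
        bIE_eq_Pfun q _ hn', bIE_eq_Pfun q _ hn', Pfun_succ_step q n h1 j]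
      ring
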